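/- For a symmetric real n×n matrix S with Newton transformation P_r, one has trace(P_r S²) = σ₁ σ_{r+1} − (r+2) σ_{r+2}. -/

import Mathlib

open Matrix
open Finset

/-- A real symmetric matrix is Hermitian. -/
theorem Matrix.IsSymm.isHerm {n : ℕ} {S : Matrix (Fin n) (Fin n) ℝ}
    (h : S.IsSymm) : S.IsHermitian := by
  rw [Matrix.IsHermitian, Matrix.conjTranspose_eq_transpose_of_trivial]; exact h

/-- The `r`-th elementary symmetric function of the eigenvalues of a real
symmetric matrix. -/
noncomputable def sigmaEig {n : ℕ} (S : Matrix (Fin n) (Fin n) ℝ)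
    (hS : S.IsSymm) (r : ℕ) : ℝ :=
  ∑ t ∈ Finset.powersetCard r (Finset.univ : Finset (Fin n)),
    ∏ i ∈ t, hS.isHerm.eigenvalues i

/-- The `r`-th Newton transformation `P_r = Σ_{k=0}^r (-1)^k σ_{r-k} S^k`. -/
noncomputable def newton {n : ℕ} (S : Matrix (Fin n) (Fin n) ℝ)
    (hS : S.IsSymm) (r : ℕ) : Matrix (Fin n) (Fin n) ℝ :=
  ∑ k ∈ Finset.range (r + 1), ((-1 : ℝ) ^ k * sigmaEig S hS (r - k)) • S ^ k

lemma trace_pow_eq {n : ℕ} (S : Matrix (Fin n) (Fin n) ℝ) (hS : S.IsSymm) (k : ℕ) :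
    (S ^ k).trace = ∑ i, hS.isHerm.eigenvalues i ^ k := by
  set U : Matrix (Fin n) (Fin n) ℝ := (hS.isHerm.eigenvectorUnitary : Matrix (Fin n) (Fin n) ℝ)
  have hU : U * star U = 1 := (Matrix.mem_unitaryGroup_iff).mp hS.isHerm.eigenvectorUnitary.2
  have hU' : star U * U = 1 := (Matrix.mem_unitaryGroup_iff').mp hS.isHerm.eigenvectorUnitary.2
  have hspec := hS.isHerm.spectral_theorem
  set D : Matrix (Fin n) (Fin n) ℝ := Matrix.diagonal (RCLike.ofReal ∘ hS.isHerm.eigenvalues)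
  have key : ∀ m : ℕ, S ^ m = U * D ^ m * star U := by
    intro m
    induction m with
    | zero => simp [hU]
    | succ m ih =>
      rw [pow_succ, ih, pow_succ]
      conv_lhs => rw [hspec]
      calc U * D ^ m * star U * (U * D * star U)
          = U * D ^ m * (star U * U) * D * star U := by noncomm_ring
        _ = U * (D ^ m * D) * star U := by rw [hU']; noncomm_ring
  rw [key k, Matrix.trace_mul_cycle, hU', Matrix.one_mul]
  simp [D, Matrix.diagonal_pow, Matrix.trace_diagonal]

lemma sigmaEig_eq_eval {n : ℕ} (S : Matrix (Fin n) (Fin n) ℝ) (hS : S.IsSymm) (k : ℕ) :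
    sigmaEig S hS k = MvPolynomial.eval hS.isHerm.eigenvalues (MvPolynomial.esymm (Fin n) ℝ k) := by
  simp [sigmaEig, MvPolynomial.esymm]

/-- Newton's identity, evaluated at a real tuple, reindexed over a range. -/
lemma newton_range {n : ℕ} (μ : Fin n → ℝ) (r : ℕ) :
    ∑ i ∈ Finset.range (r + 2),
        (-1 : ℝ) ^ i * MvPolynomial.eval μ (MvPolynomial.esymm (Fin n) ℝ i) * (∑ j, μ j ^ (r + 2 - i))
      = (-1 : ℝ) ^ (r + 3) *
        (((r : ℝ) + 2) * MvPolynomial.eval μ (MvPolynomial.esymm (Fin n) ℝ (r + 2))) := by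
  have h := congrArg (MvPolynomial.eval μ) (MvPolynomial.mul_esymm_eq_sum (Fin n) ℝ (r + 2))
  simp only [_root_.map_mul, map_sum, map_pow, map_neg, _root_.map_one, map_natCast] at h
  have hsum : ∑ a ∈ (Finset.HasAntidiagonal.antidiagonal (r + 2)).filter (fun a => a.1 < r + 2),
        (-1 : ℝ) ^ a.1 * MvPolynomial.eval μ (MvPolynomial.esymm (Fin n) ℝ a.1)
          * MvPolynomial.eval μ (MvPolynomial.psum (Fin n) ℝ a.2)
      = ∑ i ∈ Finset.range (r + 2),
        (-1 : ℝ) ^ i * MvPolynomial.eval μ (MvPolynomial.esymm (Fin n) ℝ i)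
          * (∑ j, μ j ^ (r + 2 - i)) := by
    rw [Finset.sum_filter, Finset.Nat.sum_antidiagonal_eq_sum_range_succ_mk,
      Finset.sum_range_succ, if_neg (lt_irrefl _), add_zero]
    refine Finset.sum_congr rfl fun i hi => ?_
    rw [if_pos (Finset.mem_range.mp hi)]
    simp [MvPolynomial.psum]
  rw [hsum] at h
  push_cast at h
  rw [show r + 3 = r + 2 + 1 from rfl, h, ← mul_assoc, ← pow_add]
  rw [show ((-1:ℝ)) ^ (r + 2 + 1 + (r + 2 + 1)) = 1 from Even.neg_one_pow ⟨r + 3, by ring⟩]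
  rw [one_mul]

/-- `trace(P_r S²) = σ₁ σ_{r+1} − (r+2) σ_{r+2}`. -/
theorem stmt_7 {n : ℕ} (S : Matrix (Fin n) (Fin n) ℝ) (hS : S.IsSymm)
    (r : ℕ) (hr : r ≤ n) :
    (newton S hS r * S ^ 2).trace =
      sigmaEig S hS 1 * sigmaEig S hS (r + 1) - (r + 2 : ℝ) * sigmaEig S hS (r + 2) := by
  have traceEq : (newton S hS r * S ^ 2).trace
      = ∑ k ∈ range (r + 1), (-1 : ℝ) ^ k * sigmaEig S hS (r - k)
          * (∑ i, hS.isHerm.eigenvalues i ^ (k + 2)) := by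
    rw [newton, Finset.sum_mul, Matrix.trace_sum]
    refine Finset.sum_congr rfl fun k _ => ?_
    rw [smul_mul_assoc, Matrix.trace_smul, ← pow_add, trace_pow_eq S hS]
    simp [smul_eq_mul, mul_assoc]
  have reflect : ∑ k ∈ range (r + 1), (-1 : ℝ) ^ k * sigmaEig S hS (r - k)
          * (∑ i, hS.isHerm.eigenvalues i ^ (k + 2))
      = (-1 : ℝ) ^ r * ∑ i ∈ range (r + 1), (-1 : ℝ) ^ i * sigmaEig S hS i
          * (∑ j, hS.isHerm.eigenvalues j ^ (r + 2 - i)) := by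
    rw [Finset.mul_sum, ← Finset.sum_range_reflect]
    refine Finset.sum_congr rfl fun k hk => ?_
    have hk' : k ≤ r := Nat.lt_succ_iff.mp (Finset.mem_range.mp hk)
    have e1 : r + 1 - 1 - k = r - k := by omega
    have e2 : r - (r - k) = k := by omega
    have e3 : r - k + 2 = r + 2 - k := by omega
    rw [e1, e2, e3]
    have hC : (-1 : ℝ) ^ (r - k) * (-1) ^ k = (-1) ^ r := by
      rw [← pow_add]; congr 1; omega
    have hD : (-1 : ℝ) ^ k * (-1) ^ k = 1 := by
      rw [← pow_add]; exact Even.neg_one_pow ⟨k, rfl⟩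
    set P : ℝ := ∑ j, hS.isHerm.eigenvalues j ^ (r + 2 - k)
    linear_combination (sigmaEig S hS k * P) * (-1 : ℝ) ^ k * hC
      - (sigmaEig S hS k * P) * (-1 : ℝ) ^ (r - k) * hD
  have split := Finset.sum_range_succ
    (fun i => (-1 : ℝ) ^ i * sigmaEig S hS i * (∑ j, hS.isHerm.eigenvalues j ^ (r + 2 - i))) (r + 1)
  have hnr := newton_range hS.isHerm.eigenvalues r
  have hnr' : ∑ i ∈ Finset.range (r + 2), (-1 : ℝ) ^ i * sigmaEig S hS i
        * (∑ j, hS.isHerm.eigenvalues j ^ (r + 2 - i))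
      = (-1 : ℝ) ^ (r + 3) * (((r : ℝ) + 2) * sigmaEig S hS (r + 2)) := by
    rw [sigmaEig_eq_eval S hS (r + 2), ← hnr]
    exact Finset.sum_congr rfl fun i _ => by rw [sigmaEig_eq_eval]
  simp only [show r + 2 - (r + 1) = 1 from by omega] at split
  have hp1 : (∑ j, hS.isHerm.eigenvalues j ^ 1) = sigmaEig S hS 1 := by
    rw [sigmaEig_eq_eval, MvPolynomial.esymm_one]
    simp
  rw [traceEq, reflect]
  have hfin : ∑ i ∈ range (r + 1), (-1 : ℝ) ^ i * sigmaEig S hS i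
          * (∑ j, hS.isHerm.eigenvalues j ^ (r + 2 - i))
      = (-1 : ℝ) ^ (r + 3) * (((r : ℝ) + 2) * sigmaEig S hS (r + 2))
        - (-1 : ℝ) ^ (r + 1) * sigmaEig S hS (r + 1) * sigmaEig S hS 1 := by
    rw [← hnr', split, hp1]; ring
  rw [hfin]
  have hA : (-1 : ℝ) ^ r * (-1) ^ (r + 3) = -1 := by
    rw [← pow_add]; exact Odd.neg_one_pow ⟨r + 1, by ring⟩
  have hB : (-1 : ℝ) ^ r * (-1) ^ (r + 1) = -1 := by
    rw [← pow_add]; exact Odd.neg_one_pow ⟨r, by ring⟩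
  linear_combination (((r : ℝ) + 2) * sigmaEig S hS (r + 2)) * hA
    - (sigmaEig S hS (r + 1) * sigmaEig S hS 1) * hB
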